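/- Let n ≥ 1, let |ψ⁺⟩ = n^(−1/2) Σᵢ |i⟩ ⊗ |i⟩ ∈ ℂⁿ ⊗ ℂⁿ and P⁺ = |ψ⁺⟩⟨ψ⁺| the maximally entangled density matrix, and let Φ₁, Φ₂ : Matrix (Fin n) (Fin n) ℂ → Matrix (Fin n) (Fin n) ℂ be quantum channels. Then there exists a density matrix σ indexed by Fin n × Fin n × Fin n with Tr₃ σ = (id ⊗ Φ₁)(P⁺) and Tr₂ σ = (id ⊗ Φ₂)(P⁺) if and only if Φ₁ and Φ₂ are compatible. (Equivalently: the maximally entangled state is steerable by Φ₁, Φ₂ if and only if Φ₁, Φ₂ are incompatible.) -/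

import Mathlib

open Matrix BigOperators
open scoped ComplexOrder

noncomputable section

/-- A density matrix: positive semidefinite with trace 1. -/
def IsDensity {ι : Type*} [Fintype ι] (M : Matrix ι ι ℂ) : Prop :=
  M.PosSemidef ∧ M.trace = 1

/-- The Choi matrix of a linear map between matrix spaces, indexed by (output × input). -/
def choi {ι κ : Type*} [Fintype ι] [DecidableEq ι]
    (Φ : Matrix ι ι ℂ →ₗ[ℂ] Matrix κ κ ℂ) : Matrix (κ × ι) (κ × ι) ℂ :=
  fun p q => Φ (Matrix.single p.2 q.2 1) p.1 q.1

/-- A quantum channel: trace preserving with positive semidefinite Choi matrix. -/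
def IsQChannel {ι κ : Type*} [Fintype ι] [DecidableEq ι] [Fintype κ]
    (Φ : Matrix ι ι ℂ →ₗ[ℂ] Matrix κ κ ℂ) : Prop :=
  (∀ X, (Φ X).trace = X.trace) ∧ (choi Φ).PosSemidef

/-- The tensor product `Φ ⊗ Ψ` of maps on matrix spaces, determined by
`(Φ ⊗ Ψ)(X ⊗ₖ Y) = (Φ X) ⊗ₖ (Ψ Y)`. -/
def tmap {α β γ δ : Type*} [Fintype α] [DecidableEq α] [Fintype γ] [DecidableEq γ]
    (Φ : Matrix α α ℂ → Matrix β β ℂ) (Ψ : Matrix γ γ ℂ → Matrix δ δ ℂ)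
    (M : Matrix (α × γ) (α × γ) ℂ) : Matrix (β × δ) (β × δ) ℂ :=
  fun p q => ∑ a, ∑ a', ∑ c, ∑ c', M (a, c) (a', c') *
    (Φ (Matrix.single a a' 1) p.1 q.1 * Ψ (Matrix.single c c' 1) p.2 q.2)

/-- Partial trace over the second factor of a bipartite matrix. -/
def ptr2 {α β : Type*} [Fintype β] (M : Matrix (α × β) (α × β) ℂ) : Matrix α α ℂ :=
  fun a a' => ∑ b, M (a, b) (a', b)

/-- Partial trace over the first factor of a bipartite matrix. -/
def ptr1 {α β : Type*} [Fintype α] (M : Matrix (α × β) (α × β) ℂ) : Matrix β β ℂ :=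
  fun b b' => ∑ a, M (a, b) (a, b')

/-- Compatibility of two quantum channels: they arise as the two marginals of a single
channel into the tensor product. -/
def Compatible {n : ℕ} (Φ₁ Φ₂ : Matrix (Fin n) (Fin n) ℂ →ₗ[ℂ] Matrix (Fin n) (Fin n) ℂ) : Prop :=
  ∃ Φ : Matrix (Fin n) (Fin n) ℂ →ₗ[ℂ] Matrix (Fin n × Fin n) (Fin n × Fin n) ℂ,
    IsQChannel Φ ∧ ∀ ρ : Matrix (Fin n) (Fin n) ℂ, IsDensity ρ →
      ptr2 (Φ ρ) = Φ₁ ρ ∧ ptr1 (Φ ρ) = Φ₂ ρ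

/-- Partial trace over the third factor of a tripartite matrix. -/
def ptrace3 {α β γ : Type*} [Fintype γ] (M : Matrix (α × β × γ) (α × β × γ) ℂ) :
    Matrix (α × β) (α × β) ℂ :=
  fun p q => ∑ c, M (p.1, p.2, c) (q.1, q.2, c)

/-- Partial trace over the second factor of a tripartite matrix. -/
def ptrace2 {α β γ : Type*} [Fintype β] (M : Matrix (α × β × γ) (α × β × γ) ℂ) :
    Matrix (α × γ) (α × γ) ℂ :=
  fun p q => ∑ b, M (p.1, b, p.2) (q.1, b, q.2)

/-- The maximally entangled state `|ψ⁺⟩⟨ψ⁺|` with `|ψ⁺⟩ = n^{-1/2} ∑ᵢ |ii⟩`. -/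
def mePlus (n : ℕ) : Matrix (Fin n × Fin n) (Fin n × Fin n) ℂ :=
  fun p q => if p.1 = p.2 ∧ q.1 = q.2 then ((n : ℂ))⁻¹ else 0


/-! ### Auxiliary lemmas -/

lemma outer_psd {ι : Type*} [Fintype ι] (v : ι → ℂ) :
    (Matrix.vecMulVec v (star v)).PosSemidef := by
  have : Matrix.vecMulVec v (star v) = Matrix.replicateCol Unit v * (Matrix.replicateCol Unit v)ᴴ := by
    rw [Matrix.conjTranspose_replicateCol, ← Matrix.vecMulVec_eq]
  rw [this]
  exact Matrix.posSemidef_self_mul_conjTranspose _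

lemma smul_psd {ι : Type*} [Fintype ι] {M : Matrix ι ι ℂ} (hM : M.PosSemidef)
    {c : ℂ} (hc : 0 ≤ c) : (c • M).PosSemidef := by
  have him : c.im = 0 := by
    have := (Complex.le_def.mp hc).2; simpa using this.symm
  constructor
  · unfold Matrix.IsHermitian
    rw [Matrix.conjTranspose_smul, hM.1]
    congr 1
    exact Complex.conj_eq_iff_im.mpr him
  · exact (hM.smul hc).2

lemma half_nonneg : (0:ℂ) ≤ (2:ℂ)⁻¹ := by
  rw [Complex.le_def]; norm_num

lemma std_decomp {n : ℕ} {i j : Fin n} (hij : i ≠ j) :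
    Matrix.single i j (1:ℂ) =
      ((2:ℂ)⁻¹ • Matrix.vecMulVec (fun k => if k = i then 1 else if k = j then 1 else 0)
          (star (fun k => if k = i then 1 else if k = j then 1 else 0)))
      + Complex.I • ((2:ℂ)⁻¹ • Matrix.vecMulVec
          (fun k => if k = i then 1 else if k = j then Complex.I else 0)
          (star (fun k => if k = i then (1:ℂ) else if k = j then Complex.I else 0)))
      - ((1+Complex.I)/2) • (Matrix.single i i 1 + Matrix.single j j 1) := by
  funext a b
  simp only [Matrix.single, Matrix.of_apply, Matrix.sub_apply, Matrix.add_apply,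
    Matrix.smul_apply, Matrix.vecMulVec_apply, Pi.star_apply, smul_eq_mul, Complex.star_def]
  by_cases hai : a = i <;> by_cases haj : a = j <;> by_cases hbi : b = i <;> by_cases hbj : b = j <;>
    subst_vars <;> simp_all [eq_comm] <;> ring_nf <;> norm_num [Complex.ext_iff]

lemma density_std {n : ℕ} (i : Fin n) : IsDensity (Matrix.single i i (1:ℂ)) := by
  constructor
  · have : Matrix.single i i (1:ℂ) =
        Matrix.vecMulVec (fun k => if k = i then 1 else 0)
          (star (fun k => if k = i then (1:ℂ) else 0)) := by
      funext a b
      by_cases h1 : i = a <;> by_cases h2 : i = b <;>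
        simp [Matrix.single, Matrix.vecMulVec_apply, h1, h2, eq_comm]
    rw [this]; exact outer_psd _
  · simp [Matrix.trace, Matrix.diag, Matrix.single, eq_comm, ite_and]

lemma density_rho1 {n : ℕ} {i j : Fin n} (hij : i ≠ j) :
    IsDensity ((2:ℂ)⁻¹ • Matrix.vecMulVec (fun k => if k = i then 1 else if k = j then 1 else 0)
      (star (fun k => if k = i then (1:ℂ) else if k = j then 1 else 0))) := by
  constructor
  · exact smul_psd (outer_psd _) half_nonneg
  · rw [Matrix.trace_smul]
    have : (Matrix.vecMulVec (fun k => if k = i then 1 else if k = j then 1 else 0)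
        (star (fun k => if k = i then (1:ℂ) else if k = j then 1 else 0))).trace = 2 := by
      simp only [Matrix.trace, Matrix.diag, Matrix.vecMulVec_apply, Pi.star_apply]
      rw [Finset.sum_eq_add_of_mem i j (Finset.mem_univ i) (Finset.mem_univ j) hij ?_]
      · simp [hij, hij.symm]; norm_num
      · intro k _ hk
        simp only [ne_eq] at hk
        simp [hk.1, hk.2]
    rw [this]; norm_num

lemma density_rho2 {n : ℕ} {i j : Fin n} (hij : i ≠ j) :
    IsDensity ((2:ℂ)⁻¹ • Matrix.vecMulVec (fun k => if k = i then 1 else if k = j then Complex.I else 0)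
      (star (fun k => if k = i then (1:ℂ) else if k = j then Complex.I else 0))) := by
  constructor
  · exact smul_psd (outer_psd _) half_nonneg
  · rw [Matrix.trace_smul]
    have : (Matrix.vecMulVec (fun k => if k = i then 1 else if k = j then Complex.I else 0)
        (star (fun k => if k = i then (1:ℂ) else if k = j then Complex.I else 0))).trace = 2 := by
      simp only [Matrix.trace, Matrix.diag, Matrix.vecMulVec_apply, Pi.star_apply]
      rw [Finset.sum_eq_add_of_mem i j (Finset.mem_univ i) (Finset.mem_univ j) hij ?_]
      · simp [hij, hij.symm, Complex.ext_iff]; norm_num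
      · intro k _ hk
        simp only [ne_eq] at hk
        simp [hk.1, hk.2]
    rw [this]; norm_num

/-- Two linear maps agreeing on all density matrices are equal. -/
lemma linearMap_ext_of_density {n : ℕ} {W : Type*} [AddCommGroup W] [Module ℂ W]
    (F G : Matrix (Fin n) (Fin n) ℂ →ₗ[ℂ] W)
    (h : ∀ ρ, IsDensity ρ → F ρ = G ρ) : F = G := by
  have key : ∀ i j : Fin n, F (Matrix.single i j 1) = G (Matrix.single i j 1) := by
    intro i j
    by_cases hij : i = j
    · subst hij; exact h _ (density_std i)
    · have h1 := h _ (density_rho1 hij)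
      have h2 := h _ (density_rho2 hij)
      rw [LinearMap.map_smul F, LinearMap.map_smul G] at h1 h2
      have e1 := congrArg (fun x => (2:ℂ) • x) h1
      have e2 := congrArg (fun x => (2:ℂ) • x) h2
      simp only [smul_smul] at e1 e2
      norm_num at e1 e2
      rw [std_decomp hij]
      simp only [map_sub, map_add, LinearMap.map_smul]
      rw [e1, e2, h _ (density_std i), h _ (density_std j)]
  ext X
  rw [Matrix.matrix_eq_sum_single X]
  simp only [map_sum]
  refine Finset.sum_congr rfl fun i _ => Finset.sum_congr rfl fun j _ => ?_
  have hX : Matrix.single i j (X i j) = X i j • Matrix.single i j (1:ℂ) := by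
    rw [Matrix.smul_single, smul_eq_mul, mul_one]
  rw [hX, LinearMap.map_smul, LinearMap.map_smul, key]

/-- `ptr2` as a linear map. -/
def ptr2L {α β : Type*} [Fintype α] [Fintype β] :
    Matrix (α × β) (α × β) ℂ →ₗ[ℂ] Matrix α α ℂ where
  toFun := ptr2
  map_add' M N := by funext a a'; simp [ptr2, Finset.sum_add_distrib]
  map_smul' c M := by funext a a'; simp [ptr2, Finset.mul_sum]

/-- `ptr1` as a linear map. -/
def ptr1L {α β : Type*} [Fintype α] [Fintype β] :
    Matrix (α × β) (α × β) ℂ →ₗ[ℂ] Matrix β β ℂ where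
  toFun := ptr1
  map_add' M N := by funext a a'; simp [ptr1, Finset.sum_add_distrib]
  map_smul' c M := by funext a a'; simp [ptr1, Finset.mul_sum]

/-- Entrywise formula for `tmap id Φ` applied to the maximally entangled state. -/
lemma tmap_mePlus {n : ℕ} {κ : Type*} [Fintype κ]
    (Φ : Matrix (Fin n) (Fin n) ℂ →ₗ[ℂ] Matrix κ κ ℂ)
    (i j : Fin n) (w w' : κ) :
    tmap id (⇑Φ) (mePlus n) (i, w) (j, w') = (n:ℂ)⁻¹ * Φ (Matrix.single i j 1) w w' := by
  simp only [tmap, mePlus, id_eq]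
  rw [Finset.sum_eq_single i]; rotate_left
  · intro b _ hb; simp [Matrix.single, hb]
  · intro h; exact absurd (Finset.mem_univ i) h
  rw [Finset.sum_eq_single j]; rotate_left
  · intro b _ hb; simp [Matrix.single, hb]
  · intro h; exact absurd (Finset.mem_univ j) h
  rw [Finset.sum_eq_single i]; rotate_left
  · intro b _ hb; simp [Ne.symm hb]
  · intro h; exact absurd (Finset.mem_univ i) h
  rw [Finset.sum_eq_single j]; rotate_left
  · intro b _ hb; simp [Ne.symm hb]
  · intro h; exact absurd (Finset.mem_univ j) h
  simp [Matrix.single]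


/-- A linear map applied to a matrix, entrywise, as a sum over basis matrices. -/
lemma map_apply_sum {n : ℕ} {κ : Type*} [Fintype κ]
    (Φ₁ : Matrix (Fin n) (Fin n) ℂ →ₗ[ℂ] Matrix κ κ ℂ)
    (ρ : Matrix (Fin n) (Fin n) ℂ) (x x' : κ) :
    Φ₁ ρ x x' = ∑ i, ∑ j, ρ i j * Φ₁ (Matrix.single i j 1) x x' := by
  conv_lhs => rw [Matrix.matrix_eq_sum_single ρ]
  rw [map_sum, Matrix.sum_apply]
  refine Finset.sum_congr rfl fun i _ => ?_
  rw [map_sum, Matrix.sum_apply]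
  refine Finset.sum_congr rfl fun j _ => ?_
  have hX : Matrix.single i j (ρ i j) = ρ i j • Matrix.single i j (1:ℂ) := by
    rw [Matrix.smul_single, smul_eq_mul, mul_one]
  rw [hX, LinearMap.map_smul]
  simp

lemma trace_stdBasis {n : ℕ} (i j : Fin n) :
    (Matrix.single i j (1:ℂ)).trace = if i = j then 1 else 0 := by
  by_cases h : i = j
  · subst h; simp [Matrix.trace, Matrix.diag, Matrix.single, eq_comm, ite_and]
  · rw [if_neg h]
    simp only [Matrix.trace, Matrix.diag, Matrix.single, Matrix.of_apply]
    refine Finset.sum_eq_zero fun k _ => ?_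
    rw [if_neg]
    rintro ⟨rfl, rfl⟩; exact h rfl

lemma natCast_nonneg' (n : ℕ) : (0:ℂ) ≤ (n:ℂ) := by
  rw [Complex.le_def]; simp

lemma inv_natCast_nonneg' (n : ℕ) : (0:ℂ) ≤ ((n:ℂ))⁻¹ := by
  have : ((n:ℂ))⁻¹ = (((n:ℝ)⁻¹ : ℝ) : ℂ) := by push_cast; ring
  rw [this, Complex.le_def]
  refine ⟨by simpa using inv_nonneg.mpr (Nat.cast_nonneg n), by simp⟩

/-- the maximally entangled state is not steerable by channels `Φ₁, Φ₂`
(i.e. a joint tripartite state with the right marginals exists) iff `Φ₁, Φ₂` are compatible. -/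
theorem mePlus_not_steerable_iff_compatible {n : ℕ} (hn : 1 ≤ n)
    (Φ₁ Φ₂ : Matrix (Fin n) (Fin n) ℂ →ₗ[ℂ] Matrix (Fin n) (Fin n) ℂ)
    (hΦ₁ : IsQChannel Φ₁) (hΦ₂ : IsQChannel Φ₂) :
    (∃ σ : Matrix (Fin n × Fin n × Fin n) (Fin n × Fin n × Fin n) ℂ,
        IsDensity σ ∧
        ptrace3 σ = tmap id (⇑Φ₁) (mePlus n) ∧
        ptrace2 σ = tmap id (⇑Φ₂) (mePlus n)) ↔
      Compatible Φ₁ Φ₂ := by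
  have hn0 : (n:ℂ) ≠ 0 := Nat.cast_ne_zero.mpr (by omega)
  constructor
  · rintro ⟨σ, ⟨hpsd, htr⟩, h3m, h2m⟩
    -- marginal identities for σ
    have marg1 : ∀ i j x x' : Fin n, (∑ y, σ (i, x, y) (j, x', y))
        = (n:ℂ)⁻¹ * Φ₁ (Matrix.single i j 1) x x' := by
      intro i j x x'
      have h := congrFun (congrFun h3m (i, x)) (j, x')
      rw [tmap_mePlus Φ₁ i j x x'] at h
      exact h
    have marg2 : ∀ i j y y' : Fin n, (∑ x, σ (i, x, y) (j, x, y'))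
        = (n:ℂ)⁻¹ * Φ₂ (Matrix.single i j 1) y y' := by
      intro i j y y'
      have h := congrFun (congrFun h2m (i, y)) (j, y')
      rw [tmap_mePlus Φ₂ i j y y'] at h
      exact h
    have hdiag : ∀ i j : Fin n, (∑ x, ∑ y, σ (i, x, y) (j, x, y))
        = (n:ℂ)⁻¹ * (if i = j then 1 else 0) := by
      intro i j
      rw [Finset.sum_congr rfl fun x _ => marg1 i j x x, ← Finset.mul_sum]
      congr 1
      have : (∑ x, Φ₁ (Matrix.single i j 1) x x)
          = (Φ₁ (Matrix.single i j 1)).trace := rfl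
      rw [this, hΦ₁.1, trace_stdBasis]
    refine ⟨{
      toFun := fun X p q => (n:ℂ) * ∑ i, ∑ j, X i j * σ (i, p.1, p.2) (j, q.1, q.2)
      map_add' := fun X Y => by
        funext p q
        simp [Matrix.add_apply, add_mul, Finset.sum_add_distrib, mul_add]
        rfl
      map_smul' := fun c X => by
        funext p q
        simp only [Matrix.smul_apply, smul_eq_mul, RingHom.id_apply, Pi.smul_apply,
          mul_assoc, ← Finset.mul_sum]
        change _ = c * ((n:ℂ) * _)
        ring }, ⟨?_, ?_⟩, ?_⟩
    · -- trace preserving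
      intro X
      show (∑ p : Fin n × Fin n, (n:ℂ) * ∑ i, ∑ j, X i j * σ (i, p.1, p.2) (j, p.1, p.2))
        = X.trace
      rw [← Finset.mul_sum, Finset.sum_comm]
      have : ∀ i : Fin n, (∑ p : Fin n × Fin n, ∑ j, X i j * σ (i, p.1, p.2) (j, p.1, p.2))
          = ∑ j, X i j * ((n:ℂ)⁻¹ * (if i = j then 1 else 0)) := by
        intro i
        rw [Finset.sum_comm]
        refine Finset.sum_congr rfl fun j _ => ?_
        rw [← Finset.mul_sum, ← hdiag i j, Fintype.sum_prod_type]
      rw [Finset.sum_congr rfl fun i _ => this i]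
      simp only [mul_ite, mul_one, mul_zero, Finset.sum_ite_eq, Finset.mem_univ, if_true]
      rw [Finset.sum_congr rfl fun x _ => mul_comm (X x x) ((n:ℂ)⁻¹), ← Finset.mul_sum,
        ← mul_assoc, mul_inv_cancel₀ hn0, one_mul]
      rfl
    · -- Choi matrix PSD
      have hchoi : choi ({
          toFun := fun X p q => (n:ℂ) * ∑ i, ∑ j, X i j * σ (i, p.1, p.2) (j, q.1, q.2)
          map_add' := fun X Y => by
            funext p q
            simp [Matrix.add_apply, add_mul, Finset.sum_add_distrib, mul_add]
            rfl
          map_smul' := fun c X => by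
            funext p q
            simp only [Matrix.smul_apply, smul_eq_mul, RingHom.id_apply, Pi.smul_apply,
              mul_assoc, ← Finset.mul_sum]
            change _ = c * ((n:ℂ) * _)
            ring } : Matrix (Fin n) (Fin n) ℂ →ₗ[ℂ] Matrix (Fin n × Fin n) (Fin n × Fin n) ℂ)
          = (n:ℂ) • σ.submatrix (fun p => (p.2, p.1.1, p.1.2)) (fun p => (p.2, p.1.1, p.1.2)) := by
        funext p q
        show (n:ℂ) * ∑ a, ∑ b, Matrix.single p.2 q.2 1 a b * σ (a, p.1.1, p.1.2) (b, q.1.1, q.1.2)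
          = ((n:ℂ) • σ.submatrix _ _) p q
        rw [Finset.sum_eq_single p.2]; rotate_left
        · intro b _ hb; simp [Matrix.single, hb, Ne.symm hb]
        · intro h; exact absurd (Finset.mem_univ p.2) h
        rw [Finset.sum_eq_single q.2]; rotate_left
        · intro b _ hb; simp [Matrix.single, hb, Ne.symm hb]
        · intro h; exact absurd (Finset.mem_univ q.2) h
        simp [Matrix.single]
      rw [hchoi]
      exact smul_psd (hpsd.submatrix _) (natCast_nonneg' n)
    · -- marginals
      intro ρ _
      constructor
      · funext x x'
        show (∑ y, (n:ℂ) * ∑ i, ∑ j, ρ i j * σ (i, x, y) (j, x', y)) = Φ₁ ρ x x'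
        rw [← Finset.mul_sum, Finset.sum_comm]
        have : ∀ i : Fin n, (∑ y : Fin n, ∑ j, ρ i j * σ (i, x, y) (j, x', y))
            = ∑ j, ρ i j * ((n:ℂ)⁻¹ * Φ₁ (Matrix.single i j 1) x x') := by
          intro i
          rw [Finset.sum_comm]
          refine Finset.sum_congr rfl fun j _ => ?_
          rw [← Finset.mul_sum, marg1 i j x x']
        rw [Finset.sum_congr rfl fun i _ => this i, map_apply_sum Φ₁ ρ x x']
        simp only [← mul_assoc, Finset.mul_sum]
        refine Finset.sum_congr rfl fun i _ => Finset.sum_congr rfl fun j _ => ?_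
        field_simp
        try ring
      · funext y y'
        show (∑ x, (n:ℂ) * ∑ i, ∑ j, ρ i j * σ (i, x, y) (j, x, y')) = Φ₂ ρ y y'
        rw [← Finset.mul_sum, Finset.sum_comm]
        have : ∀ i : Fin n, (∑ x : Fin n, ∑ j, ρ i j * σ (i, x, y) (j, x, y'))
            = ∑ j, ρ i j * ((n:ℂ)⁻¹ * Φ₂ (Matrix.single i j 1) y y') := by
          intro i
          rw [Finset.sum_comm]
          refine Finset.sum_congr rfl fun j _ => ?_
          rw [← Finset.mul_sum, marg2 i j y y']
        rw [Finset.sum_congr rfl fun i _ => this i, map_apply_sum Φ₂ ρ y y']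
        simp only [← mul_assoc, Finset.mul_sum]
        refine Finset.sum_congr rfl fun i _ => Finset.sum_congr rfl fun j _ => ?_
        field_simp
        try ring
  · rintro ⟨Φ, ⟨htp, hcpsd⟩, hmarg⟩
    refine ⟨tmap id (⇑Φ) (mePlus n), ⟨?_, ?_⟩, ?_, ?_⟩
    · -- PSD
      have hσ : tmap id (⇑Φ) (mePlus n)
          = (n:ℂ)⁻¹ • (choi Φ).submatrix (fun p => (p.2, p.1)) (fun p => (p.2, p.1)) := by
        funext p q
        obtain ⟨i, w⟩ := p; obtain ⟨j, w'⟩ := q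
        rw [tmap_mePlus Φ i j w w']
        rfl
      rw [hσ]
      exact smul_psd (hcpsd.submatrix _) (inv_natCast_nonneg' n)
    · -- trace
      show (∑ p : Fin n × Fin n × Fin n, tmap id (⇑Φ) (mePlus n) p p) = 1
      rw [Fintype.sum_prod_type]
      have : ∀ i : Fin n, (∑ w : Fin n × Fin n, tmap id (⇑Φ) (mePlus n) (i, w) (i, w))
          = (n:ℂ)⁻¹ := by
        intro i
        rw [Finset.sum_congr rfl fun w _ => tmap_mePlus Φ i i w w, ← Finset.mul_sum]
        have h1 : (∑ w : Fin n × Fin n, Φ (Matrix.single i i 1) w w)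
            = (Φ (Matrix.single i i 1)).trace := rfl
        rw [h1, htp, trace_stdBasis]
        simp
      rw [Finset.sum_congr rfl fun i _ => this i]
      simp [Finset.sum_const, hn0]
    · -- first marginal
      have hptr2 : ptr2L.comp Φ = Φ₁ :=
        linearMap_ext_of_density _ _ fun ρ hρ => (hmarg ρ hρ).1
      funext p q
      obtain ⟨i, x⟩ := p; obtain ⟨j, x'⟩ := q
      show (∑ c, tmap id (⇑Φ) (mePlus n) (i, x, c) (j, x', c)) = _
      rw [tmap_mePlus Φ₁ i j x x']
      rw [Finset.sum_congr rfl fun c _ => tmap_mePlus Φ i j (x, c) (x', c), ← Finset.mul_sum]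
      congr 1
      have h := LinearMap.congr_fun hptr2 (Matrix.single i j 1)
      have h2 : (∑ c, Φ (Matrix.single i j 1) (x, c) (x', c))
          = ptr2 (Φ (Matrix.single i j 1)) x x' := rfl
      rw [h2]
      rw [show ptr2 (Φ (Matrix.single i j 1)) = (ptr2L.comp Φ) (Matrix.single i j 1) from rfl, h]
    · -- second marginal
      have hptr1 : ptr1L.comp Φ = Φ₂ :=
        linearMap_ext_of_density _ _ fun ρ hρ => (hmarg ρ hρ).2
      funext p q
      obtain ⟨i, y⟩ := p; obtain ⟨j, y'⟩ := q
      show (∑ b, tmap id (⇑Φ) (mePlus n) (i, b, y) (j, b, y')) = _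
      rw [tmap_mePlus Φ₂ i j y y']
      rw [Finset.sum_congr rfl fun b _ => tmap_mePlus Φ i j (b, y) (b, y'), ← Finset.mul_sum]
      congr 1
      have h := LinearMap.congr_fun hptr1 (Matrix.single i j 1)
      have h2 : (∑ b, Φ (Matrix.single i j 1) (b, y) (b, y'))
          = ptr1 (Φ (Matrix.single i j 1)) y y' := rfl
      rw [h2]
      rw [show ptr1 (Φ (Matrix.single i j 1)) = (ptr1L.comp Φ) (Matrix.single i j 1) from rfl, h]

end
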